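/- For any 2×2 unitary matrix U, the absolute value of the (1,1) entry of U·diag(-1,1)·U†·diag(-1,1)·U equals |cos(3·arccos|U₁₁|)|; equivalently, |⟨0| U Z U† Z U |0⟩| = |4|U₀₀|³ - 3|U₀₀||, where Z = diag(-1,1). -/

import Mathlib

open Matrix Complex

theorem stmt_0 (U : Matrix (Fin 2) (Fin 2) ℂ)
    (hU : U ∈ Matrix.unitaryGroup (Fin 2) ℂ) :
    ‖(U * !![(-1 : ℂ), 0; 0, 1] * Uᴴ * !![(-1 : ℂ), 0; 0, 1] * U) 0 0‖
      = |Real.cos (3 * Real.arccos (‖U 0 0‖))| ∧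
    ‖(U * !![(-1 : ℂ), 0; 0, 1] * Uᴴ * !![(-1 : ℂ), 0; 0, 1] * U) 0 0‖
      = |4 * (‖U 0 0‖)^3 - 3 * ‖U 0 0‖| := by
  have h1 : U * Uᴴ = 1 := mem_unitaryGroup_iff.mp hU
  have h2 : Uᴴ * U = 1 := mem_unitaryGroup_iff'.mp hU
  set a := U 0 0 with ha
  set b := U 0 1 with hb
  set c := U 1 0 with hc
  set d := U 1 1 with hd
  have r00 : a * star a + b * star b = 1 := by
    have := congr_fun (congr_fun h1 0) 0
    simpa [Matrix.mul_apply, Fin.sum_univ_two, conjTranspose_apply] using this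
  have r01 : a * star c + b * star d = 0 := by
    have := congr_fun (congr_fun h1 0) 1
    simpa [Matrix.mul_apply, Fin.sum_univ_two, conjTranspose_apply] using this
  have c00 : star a * a + star c * c = 1 := by
    have := congr_fun (congr_fun h2 0) 0
    simpa [Matrix.mul_apply, Fin.sum_univ_two, conjTranspose_apply] using this
  have hE : (U * !![(-1 : ℂ), 0; 0, 1] * Uᴴ * !![(-1 : ℂ), 0; 0, 1] * U) 0 0
      = a * (4 * ((Complex.normSq a : ℝ) : ℂ) - 3) := by
    have hns : ((Complex.normSq a : ℝ) : ℂ) = a * star a := by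
      rw [Complex.normSq_eq_conj_mul_self]; exact mul_comm _ _
    have hbb : b * star b = 1 - a * star a := by linear_combination r00
    have hcc : star c * c = 1 - star a * a := by linear_combination c00
    have hbd : b * star d = - (a * star c) := by linear_combination r01
    have z00 : !![(-1:ℂ),0;0,1] 0 0 = -1 := rfl
    have z01 : !![(-1:ℂ),0;0,1] 0 1 = 0 := rfl
    have z10 : !![(-1:ℂ),0;0,1] 1 0 = 0 := rfl
    have z11 : !![(-1:ℂ),0;0,1] 1 1 = 1 := rfl
    simp only [Matrix.mul_apply, Fin.sum_univ_two, conjTranspose_apply, z00, z01, z10, z11]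
    rw [hns]
    linear_combination (-a) * hbb + c * hbd + (-2*a) * hcc
  set t := ‖a‖ with ht
  have ht0 : 0 ≤ t := norm_nonneg a
  have habs : ‖(U * !![(-1 : ℂ), 0; 0, 1] * Uᴴ * !![(-1 : ℂ), 0; 0, 1] * U) 0 0‖
      = |4 * t ^ 3 - 3 * t| := by
    rw [hE, norm_mul]
    have h4 : (4 * ((Complex.normSq a : ℝ) : ℂ) - 3) = (((4 * Complex.normSq a - 3 : ℝ)) : ℂ) := by
      push_cast; ring
    rw [h4, Complex.norm_real, Real.norm_eq_abs, ← Complex.sq_norm, ← ht]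
    have he : 4 * t ^ 3 - 3 * t = t * (4 * t ^ 2 - 3) := by ring
    rw [he, abs_mul, _root_.abs_of_nonneg ht0]
  have hsum : Complex.normSq a + Complex.normSq b = 1 := by
    have r00' : a * (starRingEnd ℂ) a + b * (starRingEnd ℂ) b = 1 := r00
    rw [Complex.mul_conj, Complex.mul_conj] at r00'
    exact_mod_cast r00'
  have ht1 : t ≤ 1 := by
    nlinarith [Complex.sq_norm a, Complex.normSq_nonneg b]
  constructor
  · rw [habs, Real.cos_three_mul, Real.cos_arccos (by linarith) ht1]
  · rw [habs]
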